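/- arXiv:2503.12784 — 2 statements merged into one kernel-verified Lean document; each statement's English description precedes it below -/
import Mathlib

section
/- Let X be a finite set of covariate values, Y a finite outcome set, D ∈ {0,1} a treatment, and define the equivalence relation x₁ ∼ x₂ iff P(Y=y | X=x₁) = P(Y=y | X=x₂) for all y. Let M(x) denote the equivalence class of x. If Y ⊥ D | X (conditional independence of Y and D given X), then Y ⊥ X | M and Y ⊥ D | M. -/
open Finset
open scoped Classical BigOperators

private lemma ratio_sum_eq {ι : Type*} (t : Finset ι) (num den : ι → ℝ) (c : ℝ)
    (h : ∀ i ∈ t, num i = c * den i) (hd : 0 < ∑ i ∈ t, den i) :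
    (∑ i ∈ t, num i) / (∑ i ∈ t, den i) = c := by
  rw [Finset.sum_congr rfl h, ← Finset.mul_sum, mul_div_assoc, div_self hd.ne', mul_one]

private lemma fib_sum {Ω 𝒳 : Type*} [Fintype Ω] [Fintype 𝒳]
    (X : Ω → 𝒳) (S : Set 𝒳) (A : Ω → Prop) (f : Ω → ℝ) :
    ∑ ω ∈ univ.filter (fun ω => A ω ∧ X ω ∈ S), f ω
      = ∑ x' ∈ univ.filter (fun x' => x' ∈ S),
          ∑ ω ∈ univ.filter (fun ω => A ω ∧ X ω = x'), f ω := by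
  rw [← Finset.sum_fiberwise_of_maps_to (g := X)
      (t := univ.filter (fun x' => x' ∈ S))
      (fun ω hω => by simp at hω ⊢; exact hω.2)]
  refine Finset.sum_congr rfl fun x' hx' => ?_
  simp only [Finset.mem_filter, Finset.mem_univ, true_and] at hx'
  refine Finset.sum_congr ?_ (fun _ _ => rfl)
  ext ω
  simp only [Finset.mem_filter, Finset.mem_univ, true_and]
  constructor
  · rintro ⟨⟨ha, _⟩, hx⟩; exact ⟨ha, hx⟩
  · rintro ⟨ha, hx⟩; exact ⟨⟨ha, hx ▸ hx'⟩, hx⟩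

private lemma fib_sum2 {Ω 𝒳 : Type*} [Fintype Ω] [Fintype 𝒳]
    (X : Ω → 𝒳) (S : Set 𝒳) (A B : Ω → Prop) (f : Ω → ℝ) :
    ∑ ω ∈ univ.filter (fun ω => A ω ∧ B ω ∧ X ω ∈ S), f ω
      = ∑ x' ∈ univ.filter (fun x' => x' ∈ S),
          ∑ ω ∈ univ.filter (fun ω => A ω ∧ B ω ∧ X ω = x'), f ω := by
  rw [← Finset.sum_fiberwise_of_maps_to (g := X)
      (t := univ.filter (fun x' => x' ∈ S))
      (fun ω hω => by simp at hω ⊢; exact hω.2.2)]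
  refine Finset.sum_congr rfl fun x' hx' => ?_
  simp only [Finset.mem_filter, Finset.mem_univ, true_and] at hx'
  refine Finset.sum_congr ?_ (fun _ _ => rfl)
  ext ω
  simp only [Finset.mem_filter, Finset.mem_univ, true_and]
  constructor
  · rintro ⟨⟨ha, hb, _⟩, hx⟩; exact ⟨ha, hb, hx⟩
  · rintro ⟨ha, hb, hx⟩; exact ⟨⟨ha, hb, hx ▸ hx'⟩, hx⟩

private lemma plain_fib_sum {Ω 𝒳 : Type*} [Fintype Ω] [Fintype 𝒳]
    (X : Ω → 𝒳) (S : Set 𝒳) (f : Ω → ℝ) :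
    ∑ ω ∈ univ.filter (fun ω => X ω ∈ S), f ω
      = ∑ x' ∈ univ.filter (fun x' => x' ∈ S),
          ∑ ω ∈ univ.filter (fun ω => X ω = x'), f ω := by
  rw [← Finset.sum_fiberwise_of_maps_to (g := X)
      (t := univ.filter (fun x' => x' ∈ S))
      (fun ω hω => by simp at hω ⊢; exact hω)]
  refine Finset.sum_congr rfl fun x' hx' => ?_
  simp only [Finset.mem_filter, Finset.mem_univ, true_and] at hx'
  refine Finset.sum_congr ?_ (fun _ _ => rfl)
  ext ω
  simp only [Finset.mem_filter, Finset.mem_univ, true_and]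
  constructor
  · rintro ⟨_, hx⟩; exact hx
  · rintro hx; exact ⟨hx ▸ hx', hx⟩

private lemma sum_filter_swap {Ω : Type*} [Fintype Ω] (P Q : Ω → Prop)
    {iP : DecidablePred P} [DecidablePred Q] (h : ∀ ω, P ω ↔ Q ω) (f : Ω → ℝ) :
    ∑ ω ∈ @Finset.filter Ω P iP univ, f ω = ∑ ω ∈ univ.filter Q, f ω := by
  refine Finset.sum_congr ?_ fun _ _ => rfl
  ext ω
  simp only [Finset.mem_filter, Finset.mem_univ, true_and]
  exact h ω

private lemma fibYD {Ω 𝒳 𝒴 : Type*} [Fintype Ω] [Fintype 𝒳] [Fintype 𝒴]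
    (X : Ω → 𝒳) (Y : Ω → 𝒴) (D : Ω → Fin 2) (S : Set 𝒳) (y : 𝒴) (d : Fin 2) (f : Ω → ℝ) :
    ∑ ω ∈ univ.filter (fun ω => Y ω = y ∧ D ω = d ∧ X ω ∈ S), f ω
      = ∑ x' ∈ univ.filter (fun x' => x' ∈ S),
          ∑ ω ∈ univ.filter (fun ω => Y ω = y ∧ D ω = d ∧ X ω = x'), f ω := by
  rw [← Finset.sum_fiberwise_of_maps_to (g := X)
      (t := univ.filter (fun x' => x' ∈ S))
      (fun ω hω => by simp at hω ⊢; exact hω.2.2)]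
  refine Finset.sum_congr rfl fun x' hx' => ?_
  simp only [Finset.mem_filter, Finset.mem_univ, true_and] at hx'
  refine Finset.sum_congr ?_ (fun _ _ => rfl)
  ext ω
  simp only [Finset.mem_filter, Finset.mem_univ, true_and]
  constructor
  · rintro ⟨⟨ha, hb, _⟩, hx⟩; exact ⟨ha, hb, hx⟩
  · rintro ⟨ha, hb, hx⟩; exact ⟨⟨ha, hb, hx ▸ hx'⟩, hx⟩

private lemma fibD {Ω 𝒳 : Type*} [Fintype Ω] [Fintype 𝒳]
    (X : Ω → 𝒳) (D : Ω → Fin 2) (S : Set 𝒳) (d : Fin 2) (f : Ω → ℝ) :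
    ∑ ω ∈ univ.filter (fun ω => D ω = d ∧ X ω ∈ S), f ω
      = ∑ x' ∈ univ.filter (fun x' => x' ∈ S),
          ∑ ω ∈ univ.filter (fun ω => D ω = d ∧ X ω = x'), f ω := by
  rw [← Finset.sum_fiberwise_of_maps_to (g := X)
      (t := univ.filter (fun x' => x' ∈ S))
      (fun ω hω => by simp at hω ⊢; exact hω.2)]
  refine Finset.sum_congr rfl fun x' hx' => ?_
  simp only [Finset.mem_filter, Finset.mem_univ, true_and] at hx'
  refine Finset.sum_congr ?_ (fun _ _ => rfl)
  ext ω
  simp only [Finset.mem_filter, Finset.mem_univ, true_and]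
  constructor
  · rintro ⟨⟨ha, _⟩, hx⟩; exact ⟨ha, hx⟩
  · rintro ⟨ha, hx⟩; exact ⟨⟨ha, hx ▸ hx'⟩, hx⟩

/-- Coarsening the covariate to its observational partition preserves
conditional independence.  If `Y ⊥ D ∣ X`, and `M` maps each covariate value to its
observational equivalence class (values with identical conditional outcome
distributions), then `Y ⊥ X ∣ M` and `Y ⊥ D ∣ M`. -/
theorem observational_partition_preserves_unconfoundedness
    {Ω 𝒳 𝒴 : Type*} [Fintype Ω] [Fintype 𝒳] [Fintype 𝒴]
    (p : Ω → ℝ) (hp : ∀ ω, 0 ≤ p ω) (hp1 : ∑ ω, p ω = 1)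
    (X : Ω → 𝒳) (Y : Ω → 𝒴) (D : Ω → Fin 2)
    (cpr : (Ω → Prop) → 𝒴 → ℝ)
    (hcpr : ∀ (A : Ω → Prop) (y : 𝒴), cpr A y =
      (∑ ω ∈ univ.filter (fun ω => Y ω = y ∧ A ω), p ω) /
        (∑ ω ∈ univ.filter A, p ω))
    (M : 𝒳 → Set 𝒳)
    (hM : ∀ x, M x = {x' | ∀ y, cpr (fun ω => X ω = x') y = cpr (fun ω => X ω = x) y})
    (hpos : ∀ (d : Fin 2) (x : 𝒳), 0 < ∑ ω ∈ univ.filter (fun ω => D ω = d ∧ X ω = x), p ω)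
    (hYD_X : ∀ (y : 𝒴) (d : Fin 2) (x : 𝒳),
      cpr (fun ω => D ω = d ∧ X ω = x) y = cpr (fun ω => X ω = x) y) :
    (∀ (y : 𝒴) (x : 𝒳), cpr (fun ω => X ω = x) y = cpr (fun ω => X ω ∈ M x) y) ∧
    (∀ (y : 𝒴) (d : Fin 2) (x : 𝒳),
      cpr (fun ω => D ω = d ∧ X ω ∈ M x) y = cpr (fun ω => X ω ∈ M x) y) := by
  have hden : ∀ x' : 𝒳, 0 < ∑ ω ∈ univ.filter (fun ω => X ω = x'), p ω := by
    intro x'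
    refine lt_of_lt_of_le (hpos 0 x') (Finset.sum_le_sum_of_subset_of_nonneg ?_ fun ω _ _ => hp ω)
    intro ω hω
    simp only [Finset.mem_filter, Finset.mem_univ, true_and] at hω ⊢
    exact hω.2
  have hnum : ∀ (y : 𝒴) (x x' : 𝒳), x' ∈ M x →
      ∑ ω ∈ univ.filter (fun ω => Y ω = y ∧ X ω = x'), p ω
        = cpr (fun ω => X ω = x) y * ∑ ω ∈ univ.filter (fun ω => X ω = x'), p ω := by
    intro y x x' hx'
    rw [hM x] at hx'
    have h1 : cpr (fun ω => X ω = x') y = cpr (fun ω => X ω = x) y := hx' y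
    rw [hcpr] at h1
    rw [← h1]
    exact ((div_eq_iff (hden x').ne').mp rfl)
  have hxmem : ∀ x : 𝒳, x ∈ M x := by
    intro x; rw [hM x]; intro y; rfl
  have hdenM : ∀ x : 𝒳, 0 < ∑ x' ∈ univ.filter (fun x' => x' ∈ M x),
      ∑ ω ∈ univ.filter (fun ω => X ω = x'), p ω := by
    intro x
    refine Finset.sum_pos' (fun i _ => le_of_lt (hden i)) ⟨x, ?_, hden x⟩
    simp [hxmem x]
  have part1 : ∀ (y : 𝒴) (x : 𝒳), cpr (fun ω => X ω = x) y = cpr (fun ω => X ω ∈ M x) y := by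
    intro y x
    rw [hcpr (fun ω => X ω ∈ M x) y]
    beta_reduce
    rw [fib_sum X (M x) (fun ω => Y ω = y) p, plain_fib_sum X (M x) p]
    exact (ratio_sum_eq _ _ _ _ (fun x' hx' => by
      simp only [Finset.mem_filter, Finset.mem_univ, true_and] at hx'
      exact hnum y x x' hx') (hdenM x)).symm
  refine ⟨part1, ?_⟩
  intro y d x
  rw [← part1 y x, hcpr (fun ω => D ω = d ∧ X ω ∈ M x) y]
  beta_reduce
  rw [sum_filter_swap (fun ω => Y ω = y ∧ D ω = d ∧ X ω ∈ M x)
        (fun ω => Y ω = y ∧ D ω = d ∧ X ω ∈ M x) (fun _ => Iff.rfl) p,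
      sum_filter_swap (fun ω => D ω = d ∧ X ω ∈ M x)
        (fun ω => D ω = d ∧ X ω ∈ M x) (fun _ => Iff.rfl) p]
  rw [fibYD X Y D (M x) y d p, fibD X D (M x) d p]
  refine ratio_sum_eq _ _ _ _ (fun x' hx' => ?_) ?_
  · simp only [Finset.mem_filter, Finset.mem_univ, true_and] at hx'
    have h3 : cpr (fun ω => D ω = d ∧ X ω = x') y = cpr (fun ω => X ω = x) y := by
      rw [hYD_X y d x']
      rw [hM x] at hx'
      exact hx' y
    rw [hcpr] at h3
    beta_reduce at h3
    rw [sum_filter_swap (fun ω => Y ω = y ∧ D ω = d ∧ X ω = x')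
          (fun ω => Y ω = y ∧ D ω = d ∧ X ω = x') (fun _ => Iff.rfl) p,
        sum_filter_swap (fun ω => D ω = d ∧ X ω = x')
          (fun ω => D ω = d ∧ X ω = x') (fun _ => Iff.rfl) p] at h3
    rw [← h3]
    exact ((div_eq_iff (hpos d x').ne').mp rfl)
  · refine Finset.sum_pos' (fun i _ => Finset.sum_nonneg fun ω _ => hp ω) ⟨x, ?_, hpos d x⟩
    simp [hxmem x]
end

section
/- Let Y ⊥ X | M and Y ⊥ D | X hold for random variables on a finite probability space, where M = f(X) is a function of X. Then P(Y=y | D=d, M=m) = P(Y=y | M=m) for all y, d, m with positive-probability conditioning events, i.e., Y ⊥ D | M. -/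
open Finset
open scoped Classical BigOperators

theorem filter_decidable_classical {α : Type*} (p : α → Prop) (h : DecidablePred p)
    (s : Finset α) :
    @Finset.filter α p h s = @Finset.filter α p (fun a => Classical.propDecidable (p a)) s := by
  congr


/-- Law-of-total-probability step.  If `M = f ∘ X` is a function of `X`,
`Y ⊥ X ∣ M` and `Y ⊥ D ∣ X`, then `Y ⊥ D ∣ M`: for all `y`, `d`, `m` with
positive-probability conditioning events, `P(Y=y ∣ D=d, M=m) = P(Y=y ∣ M=m)`. -/
theorem coarsened_conditional_independence
    {Ω 𝒳 𝒴 ℳ : Type*} [Fintype Ω] [Fintype 𝒳] [Fintype 𝒴] [Fintype ℳ]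
    (p : Ω → ℝ) (hp : ∀ ω, 0 ≤ p ω) (hp1 : ∑ ω, p ω = 1)
    (X : Ω → 𝒳) (Y : Ω → 𝒴) (D : Ω → Fin 2) (f : 𝒳 → ℳ)
    (cpr : (Ω → Prop) → 𝒴 → ℝ)
    (hcpr : ∀ (A : Ω → Prop) (y : 𝒴), cpr A y =
      (∑ ω ∈ univ.filter (fun ω => Y ω = y ∧ A ω), p ω) /
        (∑ ω ∈ univ.filter A, p ω))
    (hYX_M : ∀ (y : 𝒴) (x : 𝒳),
      (0 < ∑ ω ∈ univ.filter (fun ω => X ω = x), p ω) →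
      cpr (fun ω => X ω = x) y = cpr (fun ω => f (X ω) = f x) y)
    (hYD_X : ∀ (y : 𝒴) (d : Fin 2) (x : 𝒳),
      (0 < ∑ ω ∈ univ.filter (fun ω => D ω = d ∧ X ω = x), p ω) →
      cpr (fun ω => D ω = d ∧ X ω = x) y = cpr (fun ω => X ω = x) y) :
    ∀ (y : 𝒴) (d : Fin 2) (m : ℳ),
      (0 < ∑ ω ∈ univ.filter (fun ω => D ω = d ∧ f (X ω) = m), p ω) →
      cpr (fun ω => D ω = d ∧ f (X ω) = m) y = cpr (fun ω => f (X ω) = m) y := by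
  intro y d m hpos
  simp only [filter_decidable_classical] at hpos
  have hfib : ∀ (A : Ω → Prop), ∑ ω ∈ univ.filter A, p ω
      = ∑ x : 𝒳, ∑ ω ∈ univ.filter (fun ω => A ω ∧ X ω = x), p ω := by
    intro A
    simp only [filter_decidable_classical]
    rw [← Finset.sum_fiberwise_of_maps_to (s := univ.filter A) (t := (univ : Finset 𝒳))
      (g := X) (fun ω _ => mem_univ _) p]
    refine Finset.sum_congr rfl fun x _ => ?_
    rw [Finset.filter_filter]
    simp only [filter_decidable_classical]
  have key : ∀ x : 𝒳,
      ∑ ω ∈ univ.filter (fun ω => (Y ω = y ∧ (D ω = d ∧ f (X ω) = m)) ∧ X ω = x), p ω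
      = ((∑ ω ∈ univ.filter (fun ω => Y ω = y ∧ f (X ω) = m), p ω) /
          (∑ ω ∈ univ.filter (fun ω => f (X ω) = m), p ω))
        * ∑ ω ∈ univ.filter (fun ω => (D ω = d ∧ f (X ω) = m) ∧ X ω = x), p ω := by
    intro x
    simp only [filter_decidable_classical]
    by_cases hm : f x = m
    · have e1 : univ.filter (fun ω => (Y ω = y ∧ (D ω = d ∧ f (X ω) = m)) ∧ X ω = x)
          = univ.filter (fun ω => Y ω = y ∧ (D ω = d ∧ X ω = x)) := by
        ext ω
        simp only [Finset.mem_filter, Finset.mem_univ, true_and]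
        constructor
        · rintro ⟨⟨hy, hd, _⟩, hx⟩; exact ⟨hy, hd, hx⟩
        · rintro ⟨hy, hd, hx⟩; exact ⟨⟨hy, hd, by rw [hx, hm]⟩, hx⟩
      have e2 : univ.filter (fun ω => (D ω = d ∧ f (X ω) = m) ∧ X ω = x)
          = univ.filter (fun ω => D ω = d ∧ X ω = x) := by
        ext ω
        simp only [Finset.mem_filter, Finset.mem_univ, true_and]
        constructor
        · rintro ⟨⟨hd, _⟩, hx⟩; exact ⟨hd, hx⟩
        · rintro ⟨hd, hx⟩; exact ⟨⟨hd, by rw [hx, hm]⟩, hx⟩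
      simp only [filter_decidable_classical] at e1 e2
      rw [e1, e2]
      by_cases hz : 0 < ∑ ω ∈ @Finset.filter Ω
          (fun ω => D ω = d ∧ X ω = x) (fun ω => Classical.propDecidable _) univ, p ω
      · have hz' : (0:ℝ) < ∑ ω ∈ univ.filter (fun ω => D ω = d ∧ X ω = x), p ω := by
          convert hz using 2
          exact filter_decidable_classical _ _ _
        have hxpos : 0 < ∑ ω ∈ univ.filter (fun ω => X ω = x), p ω := by
          refine lt_of_lt_of_le hz (Finset.sum_le_sum_of_subset_of_nonneg ?_
            fun ω _ _ => hp ω)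
          intro ω hω
          simp only [Finset.mem_filter, Finset.mem_univ, true_and] at hω ⊢
          exact hω.2
        have h1 := hYD_X y d x hz'
        have h2 := hYX_M y x hxpos
        rw [hm] at h2
        have h3 := h1.trans h2
        simp only [hcpr, filter_decidable_classical] at h3
        exact (div_eq_iff (by simpa [filter_decidable_classical] using hz.ne')).mp h3
      · push_neg at hz
        have hz0 : ∑ ω ∈ @Finset.filter Ω
            (fun ω => D ω = d ∧ X ω = x) (fun ω => Classical.propDecidable _) univ, p ω = 0 :=
          le_antisymm hz (Finset.sum_nonneg fun ω _ => hp ω)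
        have hN : ∑ ω ∈ @Finset.filter Ω
            (fun ω => Y ω = y ∧ (D ω = d ∧ X ω = x)) (fun ω => Classical.propDecidable _) univ,
            p ω = 0 := by
          refine le_antisymm (le_trans (Finset.sum_le_sum_of_subset_of_nonneg ?_
            fun ω _ _ => hp ω) hz) (Finset.sum_nonneg fun ω _ => hp ω)
          intro ω hω
          simp only [Finset.mem_filter, Finset.mem_univ, true_and] at hω ⊢
          exact hω.2
        rw [hz0, hN, mul_zero]
    · have e1 : univ.filter (fun ω => (Y ω = y ∧ (D ω = d ∧ f (X ω) = m)) ∧ X ω = x)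
          = (∅ : Finset Ω) := by
        refine Finset.filter_false_of_mem fun ω _ h => ?_
        exact hm (h.2 ▸ h.1.2.2)
      have e2 : univ.filter (fun ω => (D ω = d ∧ f (X ω) = m) ∧ X ω = x)
          = (∅ : Finset Ω) := by
        refine Finset.filter_false_of_mem fun ω _ h => ?_
        exact hm (h.2 ▸ h.1.2)
      simp only [filter_decidable_classical] at e1 e2
      rw [e1, e2, Finset.sum_empty, mul_zero]
  have hNtot : ∑ ω ∈ univ.filter (fun ω => Y ω = y ∧ (D ω = d ∧ f (X ω) = m)), p ω
      = ((∑ ω ∈ univ.filter (fun ω => Y ω = y ∧ f (X ω) = m), p ω) /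
          (∑ ω ∈ univ.filter (fun ω => f (X ω) = m), p ω))
        * ∑ ω ∈ univ.filter (fun ω => D ω = d ∧ f (X ω) = m), p ω := by
    have h1 := hfib (fun ω => Y ω = y ∧ (D ω = d ∧ f (X ω) = m))
    have h2 := hfib (fun ω => D ω = d ∧ f (X ω) = m)
    simp only [filter_decidable_classical] at h1 h2 key ⊢
    rw [h1, h2, Finset.mul_sum]
    exact Finset.sum_congr rfl fun x _ => key x
  simp only [hcpr, filter_decidable_classical]
  simp only [filter_decidable_classical] at hNtot
  rw [hNtot, mul_div_assoc, div_self hpos.ne', mul_one]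
end
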